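/- Assume Criterion 1 holds. Consider the block partition of the CPF sparsity pattern S_CPF into S_A (the time-t rows listed as: time-t magnitude rows, time-t reactive- and active-power rows for C ∪ M, and the coupled active-power rows for O, restricted to the time-t columns), S_B (the same rows restricted to the time-t′ columns), S_C (the remaining rows — the coupled reactive-power rows for O and all time-t′ rows — restricted to the time-t columns), and S_D (those remaining rows restricted to the time-t′ columns). Then there exist real matrices A, B, C, D conforming respectively to S_A, S_B, S_C, S_D such that A is invertible and the Schur complement D − C·A⁻¹·B is invertible. -/

import Mathlib

open Matrix

/-- The adjacency-plus-diagonal pattern of the grid: `(n, m) ∈ P` iff `n = m`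
or `{n, m}` is an edge of the tree `T`. -/
def BusP {N : ℕ} (T : SimpleGraph (Fin (N + 1))) (n m : Fin (N + 1)) : Prop :=
  n = m ∨ T.Adj n m

/-- Column indices of the (single-time) Jacobian pattern: `Sum.inl n` is the
column `r_n` (real voltage part of bus `n`, `n ∈ {0, …, N}`), and `Sum.inr j`
is the column `i_{j+1}` (imaginary voltage part of bus `j+1`; `i_0` is omitted
since the substation angle is fixed). -/
abbrev JCol (N : ℕ) := Fin (N + 1) ⊕ Fin N

/-- The bus a column refers to. -/
def colBus {N : ℕ} : JCol N → Fin (N + 1)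
  | Sum.inl n => n
  | Sum.inr j => j.succ

/-- A magnitude row for bus `n` may be nonzero only in columns `r_n` and
(if `n ≠ 0`) `i_n`. -/
def AllowedMag {N : ℕ} (n : Fin (N + 1)) (c : JCol N) : Prop :=
  colBus c = n

/-- A power row for bus `n` may be nonzero only in the columns `r_m`, `i_m`
over all `m` with `(n, m) ∈ P`. -/
def AllowedPow {N : ℕ} (T : SimpleGraph (Fin (N + 1))) (n : Fin (N + 1))
    (c : JCol N) : Prop :=
  BusP T n (colBus c)

/-- Row indices of the pattern `S_A`: one magnitude row for each
`n ∈ {0} ∪ M`, one reactive-power row and one active-power row for each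
`n ∈ C ∪ M`, and one (coupled) active-power row for each `n ∈ O`. -/
abbrev RowA {N : ℕ} (M O C : Finset (Fin (N + 1))) :=
  ({x // x ∈ insert (0 : Fin (N + 1)) M}) ⊕
    (({x // x ∈ C ∪ M}) ⊕ (({x // x ∈ C ∪ M}) ⊕ ({x // x ∈ O})))

/-- The sparsity pattern `S_A` of the partial Jacobian `J_A`, as the predicate
telling which entries are allowed to be nonzero. -/
def AllowedA {N : ℕ} (T : SimpleGraph (Fin (N + 1))) (M O C : Finset (Fin (N + 1))) :
    RowA M O C → JCol N → Prop
  | Sum.inl n => AllowedMag n.val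
  | Sum.inr (Sum.inl n) => AllowedPow T n.val
  | Sum.inr (Sum.inr (Sum.inl n)) => AllowedPow T n.val
  | Sum.inr (Sum.inr (Sum.inr n)) => AllowedPow T n.val

/-- **Criterion 1** of the paper: there exists a family of pairwise
vertex-disjoint paths of the tree induced by `T` on `{1, …, N}` (i.e., paths
of `T` avoiding the substation `0`), one path for each node of `O`, each
starting at that node of `O` and ending at a node of `M`. -/
def Criterion1 {N : ℕ} (T : SimpleGraph (Fin (N + 1))) (M O : Finset (Fin (N + 1))) : Prop :=
  ∃ P : Fin (N + 1) → List (Fin (N + 1)),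
    (∀ o ∈ O, (P o).Nodup ∧ (P o).Chain' T.Adj ∧ (0 : Fin (N + 1)) ∉ P o ∧
      (P o).head? = some o ∧ ∃ mEnd ∈ M, (P o).getLast? = some mEnd) ∧
    ∀ o ∈ O, ∀ o' ∈ O, o ≠ o' → ∀ v ∈ P o, v ∉ P o'

/-- Row indices of the remaining (bottom) block of the CPF Jacobian pattern:
one coupled reactive-power row for each `n ∈ O`, then the time-`t′` rows: one
magnitude row for each `n ∈ {0} ∪ M`, and one reactive-power row and one
active-power row for each `n ∈ C ∪ M`. -/
abbrev RowD {N : ℕ} (M O C : Finset (Fin (N + 1))) :=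
  ({x // x ∈ O}) ⊕
    (({x // x ∈ insert (0 : Fin (N + 1)) M}) ⊕ (({x // x ∈ C ∪ M}) ⊕ ({x // x ∈ C ∪ M})))

/-- The pattern `S_B`: the top-block rows restricted to the time-`t′` columns.
Only the coupled active-power rows (for `O`) may be nonzero there. -/
def AllowedB {N : ℕ} (T : SimpleGraph (Fin (N + 1))) (M O C : Finset (Fin (N + 1))) :
    RowA M O C → JCol N → Prop
  | Sum.inl _ => fun _ => False
  | Sum.inr (Sum.inl _) => fun _ => False
  | Sum.inr (Sum.inr (Sum.inl _)) => fun _ => False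
  | Sum.inr (Sum.inr (Sum.inr n)) => AllowedPow T n.val

/-- The pattern `S_C`: the bottom-block rows restricted to the time-`t`
columns.  Only the coupled reactive-power rows (for `O`) may be nonzero. -/
def AllowedC {N : ℕ} (T : SimpleGraph (Fin (N + 1))) (M O C : Finset (Fin (N + 1))) :
    RowD M O C → JCol N → Prop
  | Sum.inl n => AllowedPow T n.val
  | Sum.inr _ => fun _ => False

/-- The pattern `S_D`: the bottom-block rows restricted to the time-`t′`
columns. -/
def AllowedD {N : ℕ} (T : SimpleGraph (Fin (N + 1))) (M O C : Finset (Fin (N + 1))) :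
    RowD M O C → JCol N → Prop
  | Sum.inl n => AllowedPow T n.val
  | Sum.inr (Sum.inl n) => AllowedMag n.val
  | Sum.inr (Sum.inr (Sum.inl n)) => AllowedPow T n.val
  | Sum.inr (Sum.inr (Sum.inr n)) => AllowedPow T n.val


section Aux

variable {N : ℕ}

/-- The auxiliary row assignment: magnitude rows take the diagonal voltage
columns, the `r`-type power rows take the diagonal real column, and the
`i`-type power rows take the column prescribed by `g` (the predecessor along
the Criterion-1 paths, or the diagonal). -/
def mySig (M O C : Finset (Fin (N + 1))) (g : {x // x ∈ C ∪ M} → Fin N) :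
    RowA M O C → JCol N
  | Sum.inl n => if h : n.val = 0 then Sum.inl 0 else Sum.inr (n.val.pred h)
  | Sum.inr (Sum.inl n) => Sum.inl n.val
  | Sum.inr (Sum.inr (Sum.inl n)) => Sum.inr (g n)
  | Sum.inr (Sum.inr (Sum.inr n)) => Sum.inl n.val

/-- The rows of the bottom-right block are, up to reordering, the same as the
rows of the top-left block. -/
def rowEquiv (M O C : Finset (Fin (N + 1))) : RowA M O C ≃ RowD M O C where
  toFun
    | Sum.inl n => Sum.inr (Sum.inl n)
    | Sum.inr (Sum.inl n) => Sum.inr (Sum.inr (Sum.inl n))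
    | Sum.inr (Sum.inr (Sum.inl n)) => Sum.inr (Sum.inr (Sum.inr n))
    | Sum.inr (Sum.inr (Sum.inr n)) => Sum.inl n
  invFun
    | Sum.inl n => Sum.inr (Sum.inr (Sum.inr n))
    | Sum.inr (Sum.inl n) => Sum.inl n
    | Sum.inr (Sum.inr (Sum.inl n)) => Sum.inr (Sum.inl n)
    | Sum.inr (Sum.inr (Sum.inr n)) => Sum.inr (Sum.inr (Sum.inl n))
  left_inv := by rintro (n | n | n | n) <;> rfl
  right_inv := by rintro (n | n | n | n) <;> rfl

lemma allowedD_rowEquiv (T : SimpleGraph (Fin (N + 1))) (M O C : Finset (Fin (N + 1)))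
    (r : RowA M O C) (c : JCol N) :
    AllowedD T M O C (rowEquiv M O C r) c ↔ AllowedA T M O C r c := by
  rcases r with n | n | n | n <;> rfl

end Aux

/-- **Lemma 5 of the paper.**  Under Criterion 1, there exist real matrices
`A, B, C, D` conforming to the blocks `S_A, S_B, S_C, S_D` of the CPF sparsity
pattern such that `A` is invertible and the Schur complement `D - C·A⁻¹·B` is
invertible. -/
theorem stmt12 {N : ℕ} (T : SimpleGraph (Fin (N + 1))) (hT : T.IsTree)
    (hleaf : ∃! v, T.Adj 0 v)
    (M O C : Finset (Fin (N + 1)))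
    (hMO : Disjoint M O) (hMC : Disjoint M C) (hOC : Disjoint O C)
    (hcover : M ∪ O ∪ C = Finset.univ \ {0})
    (hcard : M.card = O.card)
    (hcrit : Criterion1 T M O) :
    ∃ (JA : Matrix (RowA M O C) (JCol N) ℝ) (JB : Matrix (RowA M O C) (JCol N) ℝ)
      (JC : Matrix (RowD M O C) (JCol N) ℝ) (JD : Matrix (RowD M O C) (JCol N) ℝ),
      (∀ r c, JA r c ≠ 0 → AllowedA T M O C r c) ∧
      (∀ r c, JB r c ≠ 0 → AllowedB T M O C r c) ∧
      (∀ r c, JC r c ≠ 0 → AllowedC T M O C r c) ∧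
      (∀ r c, JD r c ≠ 0 → AllowedD T M O C r c) ∧
      ∃ JAinv : Matrix (JCol N) (RowA M O C) ℝ,
        JA * JAinv = 1 ∧ JAinv * JA = 1 ∧
        ∃ Z : Matrix (JCol N) (RowD M O C) ℝ,
          (JD - JC * JAinv * JB) * Z = 1 ∧ Z * (JD - JC * JAinv * JB) = 1 := by
  classical
  obtain ⟨P, hP, hdisj⟩ := hcrit
  -- basic membership facts
  have hne : ∀ x : Fin (N + 1), x ∈ M ∪ O ∪ C → x ≠ 0 := by
    intro x hx
    rw [hcover] at hx
    simpa using (Finset.mem_sdiff.mp hx).2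
  have hMne : ∀ x ∈ M, x ≠ (0 : Fin (N + 1)) := fun x hx =>
    hne x (by simp [Finset.mem_union, hx])
  have hOne : ∀ x ∈ O, x ≠ (0 : Fin (N + 1)) := fun x hx =>
    hne x (by simp [Finset.mem_union, hx])
  have hCMne : ∀ x ∈ C ∪ M, x ≠ (0 : Fin (N + 1)) := by
    intro x hx
    rcases Finset.mem_union.mp hx with h | h
    · exact hne x (by simp [Finset.mem_union, h])
    · exact hMne x h
  -- first index of an element of M on each path
  set k : Fin (N + 1) → ℕ := fun o => (P o).findIdx (fun x => decide (x ∈ M)) with hkdef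
  have hkk : ∀ o ∈ O, k o < (P o).length := by
    intro o ho
    obtain ⟨hnd, hch, h0, hhd, m, hm, hlast⟩ := hP o ho
    apply List.findIdx_lt_length_of_exists
    obtain ⟨hne', heq⟩ := List.mem_getLast?_eq_getLast (Option.mem_def.mpr hlast)
    exact ⟨m, heq ▸ List.getLast_mem hne', by simpa using hm⟩
  -- the trimmed paths
  set Q : Fin (N + 1) → List (Fin (N + 1)) := fun o => (P o).take (k o + 1) with hQdef
  have hQsub : ∀ o, ∀ v ∈ Q o, v ∈ P o := fun o => List.take_subset _ _
  have hQlen : ∀ o ∈ O, (Q o).length = k o + 1 := by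
    intro o ho
    simp only [hQdef, List.length_take]
    exact Nat.min_eq_left (Nat.succ_le_of_lt (hkk o ho))
  have hQget : ∀ o, ∀ i, i ≤ k o → (Q o)[i]? = (P o)[i]? := by
    intro o i hi
    simp [hQdef, List.getElem?_take, Nat.lt_succ_of_le hi]
  have hQnd : ∀ o ∈ O, (Q o).Nodup := fun o ho =>
    (List.take_sublist _ _).nodup (hP o ho).1
  have hQch : ∀ o ∈ O, (Q o).Chain' T.Adj := fun o ho => (hP o ho).2.1.take _
  have hQ0 : ∀ o ∈ O, (Q o)[0]? = some o := by
    intro o ho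
    rw [hQget o 0 (Nat.zero_le _), ← List.head?_eq_getElem?]
    exact (hP o ho).2.2.2.1
  have hQlastM : ∀ o ∈ O, ∀ h : k o < (P o).length, (P o)[k o] ∈ M := by
    intro o ho h
    have := @List.findIdx_getElem _ (fun x => decide (x ∈ M)) (P o) h
    simpa using this
  have hQmid : ∀ o, ∀ i, i < k o → ∀ h : i < (P o).length, (P o)[i] ∉ M := by
    intro o i hik h
    have := @List.not_of_lt_findIdx _ (fun x => decide (x ∈ M)) (P o) i hik
    simpa using this
  have hk1 : ∀ o ∈ O, 1 ≤ k o := by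
    intro o ho
    by_contra hcon
    have hk0 : k o = 0 := by omega
    obtain ⟨h0len, h0get⟩ := List.getElem?_eq_some_iff.mp (hQ0 o ho)
    have h0P : (P o)[0]? = some o := by rw [← hQget o 0 (Nat.zero_le _)]; exact hQ0 o ho
    obtain ⟨hlen, hget⟩ := List.getElem?_eq_some_iff.mp h0P
    have : (P o)[0] ∈ M := by
      have := hQlastM o ho (hk0 ▸ hkk o ho)
      simpa [hk0] using this
    rw [hget] at this
    exact Finset.disjoint_left.mp hMO this ho
  -- the successor relation along trimmed paths
  set R : Fin (N + 1) → Fin (N + 1) → Prop := fun p s =>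
    ∃ o ∈ O, ∃ i : ℕ, (Q o)[i]? = some p ∧ (Q o)[i + 1]? = some s with hRdef
  have memL : ∀ (l : List (Fin (N + 1))) (i : ℕ) (v : Fin (N + 1)),
      l[i]? = some v → v ∈ l := by
    intro l i v hv
    obtain ⟨h1, h2⟩ := List.getElem?_eq_some_iff.mp hv
    exact h2 ▸ List.getElem_mem h1
  have memQ : ∀ (o : Fin (N + 1)) (i : ℕ) (v : Fin (N + 1)),
      (Q o)[i]? = some v → v ∈ Q o := fun o => memL (Q o)
  have hRadj : ∀ p s, R p s → T.Adj p s := by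
    intro p s ⟨o, ho, i, hp, hs⟩
    obtain ⟨hslen, hsget⟩ := List.getElem?_eq_some_iff.mp hs
    obtain ⟨hplen, hpget⟩ := List.getElem?_eq_some_iff.mp hp
    have hch := List.isChain_iff_getElem.mp (hQch o ho) i (by omega)
    simpa [List.get_eq_getElem, hpget, hsget] using hch
  have hRne0 : ∀ p s, R p s → p ≠ 0 ∧ s ≠ 0 := by
    intro p s ⟨o, ho, i, hp, hs⟩
    have h0 := (hP o ho).2.2.1
    constructor
    · intro h; exact h0 (h ▸ hQsub o p (memQ o i p hp))
    · intro h; exact h0 (h ▸ hQsub o s (memQ o (i + 1) s hs))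
  -- uniqueness of the path through a vertex
  have hsamePath : ∀ p, ∀ o ∈ O, ∀ o' ∈ O, p ∈ Q o → p ∈ Q o' → o = o' := by
    intro p o ho o' ho' h h'
    by_contra hne'
    exact hdisj o ho o' ho' hne' p (hQsub o p h) (hQsub o' p h')
  have hidx : ∀ o ∈ O, ∀ i j : ℕ, ∀ v : Fin (N + 1),
      (Q o)[i]? = some v → (Q o)[j]? = some v → i = j := by
    intro o ho i j v hi hj
    obtain ⟨hi1, hi2⟩ := List.getElem?_eq_some_iff.mp hi
    obtain ⟨hj1, hj2⟩ := List.getElem?_eq_some_iff.mp hj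
    exact ((hQnd o ho).getElem_inj_iff).mp (by rw [hi2, hj2])
  have hRpredU : ∀ p p' s, R p s → R p' s → p = p' := by
    intro p p' s ⟨o, ho, i, hp, hs⟩ ⟨o', ho', i', hp', hs'⟩
    have hoo : o = o' := hsamePath s o ho o' ho' (memQ o (i + 1) s hs) (memQ o' (i' + 1) s hs')
    subst hoo
    have : i + 1 = i' + 1 := hidx o ho (i + 1) (i' + 1) s hs hs'
    have hii : i = i' := by omega
    subst hii
    rw [hp] at hp'
    exact Option.some_injective _ hp'
  have hRsuccU : ∀ p s s', R p s → R p s' → s = s' := by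
    intro p s s' ⟨o, ho, i, hp, hs⟩ ⟨o', ho', i', hp', hs'⟩
    have hoo : o = o' := hsamePath p o ho o' ho' (memQ o i p hp) (memQ o' i' p hp')
    subst hoo
    have hii : i = i' := hidx o ho i i' p hp hp'
    subst hii
    rw [hs] at hs'
    exact Option.some_injective _ hs'
  -- M vertices have no successor
  have hRnoSuccM : ∀ m ∈ M, ∀ s, ¬ R m s := by
    intro m hm s ⟨o, ho, i, hmg, hs⟩
    obtain ⟨hslen, _⟩ := List.getElem?_eq_some_iff.mp hs
    rw [hQlen o ho] at hslen
    have hik : i < k o := by omega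
    have hPi : (P o)[i]? = some m := by rw [← hQget o i (le_of_lt hik)]; exact hmg
    obtain ⟨hilen, higet⟩ := List.getElem?_eq_some_iff.mp hPi
    exact hQmid o i hik hilen (higet ▸ hm)
  -- O vertices have no predecessor
  have hRnoPredO : ∀ s ∈ O, ∀ p, ¬ R p s := by
    intro s hs p ⟨o, ho, i, hp, hsg⟩
    by_cases hos : o = s
    · subst hos
      have := hidx o ho 0 (i + 1) o (hQ0 o ho) hsg
      omega
    · have hmem : s ∈ P o := hQsub o s (memQ o (i + 1) s hsg)
      have hshead : s ∈ P s := by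
        have := (hP s hs).2.2.2.1
        rw [List.head?_eq_getElem?] at this
        exact memL (P s) 0 s this
      exact hdisj o ho s hs hos s hmem hshead
  -- every M vertex has a predecessor (counting argument)
  have hflast : ∀ o ∈ O, ∃ h : k o < (P o).length, (P o)[k o] ∈ M := fun o ho =>
    ⟨hkk o ho, hQlastM o ho (hkk o ho)⟩
  have hQlastQ : ∀ o ∈ O, ∀ h : k o < (P o).length, (Q o)[k o]? = some ((P o)[k o]'h) := by
    intro o ho h
    rw [hQget o (k o) le_rfl]
    exact List.getElem?_eq_getElem h
  have hRpredM : ∀ m ∈ M, ∃ p, R p m := by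
    intro m hm
    set f : {x // x ∈ O} → {x // x ∈ M} := fun o =>
      ⟨(P o.1)[k o.1]'(hkk o.1 o.2), hQlastM o.1 o.2 (hkk o.1 o.2)⟩ with hfdef
    have hfinj : Function.Injective f := by
      intro o o' hf
      have h1 : (Q o.1)[k o.1]? = some (f o).1 := hQlastQ o.1 o.2 (hkk o.1 o.2)
      have h2 : (Q o'.1)[k o'.1]? = some (f o').1 := hQlastQ o'.1 o'.2 (hkk o'.1 o'.2)
      rw [hf] at h1
      exact Subtype.ext (hsamePath (f o').1 o.1 o.2 o'.1 o'.2
        (memQ o.1 (k o.1) _ h1) (memQ o'.1 (k o'.1) _ h2))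
    have hcards : Fintype.card {x // x ∈ O} = Fintype.card {x // x ∈ M} := by
      rw [Fintype.card_coe, Fintype.card_coe, hcard]
    have hfsurj : Function.Surjective f :=
      ((Fintype.bijective_iff_injective_and_card f).mpr ⟨hfinj, hcards⟩).2
    obtain ⟨o, hfo⟩ := hfsurj ⟨m, hm⟩
    have hkm : (Q o.1)[k o.1]? = some m := by
      have := hQlastQ o.1 o.2 (hkk o.1 o.2)
      rw [show (P o.1)[k o.1]'(hkk o.1 o.2) = m from congrArg Subtype.val hfo] at this
      exact this
    have hk1' := hk1 o.1 o.2
    obtain ⟨p, hp⟩ : ∃ p, (Q o.1)[k o.1 - 1]? = some p := by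
      have : k o.1 - 1 < (Q o.1).length := by rw [hQlen o.1 o.2]; omega
      exact ⟨(Q o.1)[k o.1 - 1], List.getElem?_eq_getElem this⟩
    refine ⟨p, o.1, o.2, k o.1 - 1, hp, ?_⟩
    rw [show k o.1 - 1 + 1 = k o.1 by omega]
    exact hkm
  -- a successor is either in O or has a predecessor
  have hRheadO : ∀ a b, R a b → a ∈ O ∨ ∃ p, R p a := by
    intro a b ⟨o, ho, i, ha, hb⟩
    rcases Nat.eq_zero_or_pos i with hi0 | hipos
    · subst hi0
      have := hQ0 o ho
      rw [ha] at this
      left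
      rw [Option.some_injective _ this]
      exact ho
    · right
      obtain ⟨p, hp⟩ : ∃ p, (Q o)[i - 1]? = some p := by
        obtain ⟨halen, _⟩ := List.getElem?_eq_some_iff.mp ha
        have : i - 1 < (Q o).length := by omega
        exact ⟨(Q o)[i - 1], List.getElem?_eq_getElem this⟩
      refine ⟨p, o, ho, i - 1, hp, ?_⟩
      rw [show i - 1 + 1 = i by omega]
      exact ha
  -- the predecessor function
  set pf : Fin (N + 1) → Fin (N + 1) := fun n =>
    if h : ∃ p, R p n then h.choose else n with hpfdef
  have hpfR : ∀ n, (∃ p, R p n) → R (pf n) n := by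
    intro n h
    simp only [hpfdef, dif_pos h]
    exact h.choose_spec
  have hpfE : ∀ n, ¬ (∃ p, R p n) → pf n = n := by
    intro n h
    simp only [hpfdef, dif_neg h]
  have hpfne0 : ∀ n ∈ C ∪ M, pf n ≠ 0 := by
    intro n hn
    by_cases h : ∃ p, R p n
    · exact (hRne0 _ _ (hpfR n h)).1
    · rw [hpfE n h]; exact hCMne n hn
  -- pf never lands in M
  have hpfnM : ∀ n ∈ C ∪ M, pf n ∉ M := by
    intro n hn hmem
    by_cases h : ∃ p, R p n
    · exact hRnoSuccM (pf n) hmem n (hpfR n h)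
    · rw [hpfE n h] at hmem
      exact h (hRpredM n hmem)
  -- pf is injective on C ∪ M
  have hpfinj : ∀ n ∈ C ∪ M, ∀ n' ∈ C ∪ M, pf n = pf n' → n = n' := by
    intro n hn n' hn' heq
    have hnO : n ∉ O := by
      intro hno
      rcases Finset.mem_union.mp hn with h | h
      · exact Finset.disjoint_left.mp hOC hno h
      · exact Finset.disjoint_left.mp hMO h hno
    have hn'O : n' ∉ O := by
      intro hno
      rcases Finset.mem_union.mp hn' with h | h
      · exact Finset.disjoint_left.mp hOC hno h
      · exact Finset.disjoint_left.mp hMO h hno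
    by_cases h : ∃ p, R p n <;> by_cases h' : ∃ p, R p n'
    · exact hRsuccU (pf n) n n' (hpfR n h) (heq ▸ hpfR n' h')
    · exfalso
      rw [hpfE n' h'] at heq
      have hRn : R n' n := heq ▸ hpfR n h
      rcases hRheadO n' n hRn with ho | hp
      · exact hn'O ho
      · exact h' hp
    · exfalso
      rw [hpfE n h] at heq
      have hRn : R n n' := heq ▸ hpfR n' h'
      rcases hRheadO n n' hRn with ho | hp
      · exact hnO ho
      · exact h hp
    · rw [hpfE n h, hpfE n' h'] at heq
      exact heq
  -- BusP from pf
  have hpfBus : ∀ n, BusP T n (pf n) := by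
    intro n
    by_cases h : ∃ p, R p n
    · exact Or.inr ((hRadj _ _ (hpfR n h)).symm)
    · rw [hpfE n h]; exact Or.inl rfl
  -- the column assignment
  set g : {x // x ∈ C ∪ M} → Fin N := fun n =>
    (pf n.1).pred (hpfne0 n.1 n.2) with hgdef
  have hgsucc : ∀ n, (g n).succ = pf n.1 := by
    intro n; simp [hgdef, Fin.succ_pred]
  -- injectivity of the assignment
  have hinj : Function.Injective (mySig M O C g) := by
    have hAcol : ∀ (x : Fin (N + 1)) (hx : x ∈ insert (0 : Fin (N + 1)) M),
        colBus (mySig M O C g (Sum.inl ⟨x, hx⟩)) = x := by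
      intro x hx
      by_cases h1 : x = 0
      · simp [mySig, h1, colBus]
      · simp [mySig, h1, colBus, Fin.succ_pred]
    rintro (⟨n, hn⟩ | ⟨n, hn⟩ | ⟨n, hn⟩ | ⟨n, hn⟩) (⟨m, hm⟩ | ⟨m, hm⟩ | ⟨m, hm⟩ | ⟨m, hm⟩) h
    case inl.inl =>
      have h2 := congrArg colBus h
      rw [hAcol n hn, hAcol m hm] at h2
      exact congrArg Sum.inl (Subtype.ext h2)
    case inl.inr.inl =>
      exfalso
      simp only [mySig] at h
      rcases eq_or_ne n 0 with h1 | h1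
      · rw [dif_pos h1] at h
        simp only [Sum.inl.injEq] at h
        exact hCMne m hm h.symm
      · rw [dif_neg h1] at h
        simp at h
    case inl.inr.inr.inl =>
      exfalso
      simp only [mySig] at h
      rcases eq_or_ne n 0 with h1 | h1
      · rw [dif_pos h1] at h
        simp at h
      · rw [dif_neg h1] at h
        simp only [Sum.inr.injEq] at h
        have hpm : n = pf m := by
          rw [← hgsucc ⟨m, hm⟩, ← h, Fin.succ_pred]
        have hnM : n ∈ M := by
          rcases Finset.mem_insert.mp hn with h0 | hM
          · exact absurd h0 h1
          · exact hM
        exact hpfnM m hm (hpm ▸ hnM)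
    case inl.inr.inr.inr =>
      exfalso
      simp only [mySig] at h
      rcases eq_or_ne n 0 with h1 | h1
      · rw [dif_pos h1] at h
        simp only [Sum.inl.injEq] at h
        exact hOne m hm h.symm
      · rw [dif_neg h1] at h
        simp at h
    case inr.inl.inl =>
      exfalso
      simp only [mySig] at h
      rcases eq_or_ne m 0 with h1 | h1
      · rw [dif_pos h1] at h
        simp only [Sum.inl.injEq] at h
        exact hCMne n hn h
      · rw [dif_neg h1] at h
        simp at h
    case inr.inl.inr.inl =>
      simp only [mySig, Sum.inl.injEq] at h
      exact congrArg (fun x => Sum.inr (Sum.inl x)) (Subtype.ext h)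
    case inr.inl.inr.inr.inl =>
      exfalso
      simp only [mySig] at h
      simp at h
    case inr.inl.inr.inr.inr =>
      exfalso
      simp only [mySig, Sum.inl.injEq] at h
      subst h
      rcases Finset.mem_union.mp hn with hc | hM
      · exact Finset.disjoint_left.mp hOC hm hc
      · exact Finset.disjoint_left.mp hMO hM hm
    case inr.inr.inl.inl =>
      exfalso
      simp only [mySig] at h
      rcases eq_or_ne m 0 with h1 | h1
      · rw [dif_pos h1] at h
        simp at h
      · rw [dif_neg h1] at h
        simp only [Sum.inr.injEq] at h
        have hpm : m = pf n := by
          rw [← hgsucc ⟨n, hn⟩, h, Fin.succ_pred]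
        have hmM : m ∈ M := by
          rcases Finset.mem_insert.mp hm with h0 | hM
          · exact absurd h0 h1
          · exact hM
        exact hpfnM n hn (hpm ▸ hmM)
    case inr.inr.inl.inr.inl =>
      exfalso
      simp only [mySig] at h
      simp at h
    case inr.inr.inl.inr.inr.inl =>
      simp only [mySig, Sum.inr.injEq] at h
      have hpm : pf n = pf m := by
        rw [← hgsucc ⟨n, hn⟩, ← hgsucc ⟨m, hm⟩, h]
      exact congrArg (fun x => Sum.inr (Sum.inr (Sum.inl x)))
        (Subtype.ext (hpfinj n hn m hm hpm))
    case inr.inr.inl.inr.inr.inr =>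
      exfalso
      simp only [mySig] at h
      simp at h
    case inr.inr.inr.inl =>
      exfalso
      simp only [mySig] at h
      rcases eq_or_ne m 0 with h1 | h1
      · rw [dif_pos h1] at h
        simp only [Sum.inl.injEq] at h
        exact hOne n hn h
      · rw [dif_neg h1] at h
        simp at h
    case inr.inr.inr.inr.inl =>
      exfalso
      simp only [mySig, Sum.inl.injEq] at h
      subst h
      rcases Finset.mem_union.mp hm with hc | hM
      · exact Finset.disjoint_left.mp hOC hn hc
      · exact Finset.disjoint_left.mp hMO hM hn
    case inr.inr.inr.inr.inr.inl =>
      exfalso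
      simp only [mySig] at h
      simp at h
    case inr.inr.inr.inr.inr.inr =>
      simp only [mySig, Sum.inl.injEq] at h
      exact congrArg (fun x => Sum.inr (Sum.inr (Sum.inr x))) (Subtype.ext h)
  -- allowedness of the assignment
  have hallow : ∀ r, AllowedA T M O C r (mySig M O C g r) := by
    rintro (⟨n, hn⟩ | ⟨n, hn⟩ | ⟨n, hn⟩ | ⟨n, hn⟩)
    · show AllowedMag n (mySig M O C g (Sum.inl ⟨n, hn⟩))
      by_cases h1 : n = 0
      · simp [mySig, AllowedMag, colBus, h1]
      · simp [mySig, AllowedMag, colBus, h1, Fin.succ_pred]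
    · exact Or.inl rfl
    · show BusP T n (colBus (Sum.inr (g ⟨n, hn⟩)))
      show BusP T n (g ⟨n, hn⟩).succ
      rw [hgsucc ⟨n, hn⟩]
      exact hpfBus n
    · exact Or.inl rfl
  -- cardinalities
  have hcardMOC : M.card + O.card + C.card = N := by
    have hd1 : Disjoint (M ∪ O) C := Finset.disjoint_union_left.mpr ⟨hMC, hOC⟩
    have h1 : (M ∪ O ∪ C).card = (M ∪ O).card + C.card := Finset.card_union_of_disjoint hd1
    have h2 : (M ∪ O).card = M.card + O.card := Finset.card_union_of_disjoint hMO
    have h3 : (Finset.univ \ {0} : Finset (Fin (N + 1))).card = N := by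
      rw [Finset.card_sdiff]
      simp
    rw [hcover, h3] at h1
    omega
  have h0M : (0 : Fin (N + 1)) ∉ M := fun h => hMne 0 h rfl
  have hcardeq : Fintype.card (RowA M O C) = Fintype.card (JCol N) := by
    simp only [RowA, JCol, Fintype.card_sum, Fintype.card_coe, Fintype.card_fin]
    rw [Finset.card_insert_of_notMem h0M,
      Finset.card_union_of_disjoint hMC.symm]
    omega
  -- the equivalences
  have hbij : Function.Bijective (mySig M O C g) :=
    (Fintype.bijective_iff_injective_and_card _).mpr ⟨hinj, hcardeq⟩
  set σ : RowA M O C ≃ JCol N := Equiv.ofBijective _ hbij with hσdef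
  have hσ : ∀ r, σ r = mySig M O C g r := fun r => rfl
  set τ : RowD M O C ≃ JCol N := (rowEquiv M O C).symm.trans σ with hτdef
  -- the matrices
  refine ⟨(1 : Matrix (JCol N) (JCol N) ℝ).submatrix σ id, 0, 0,
    (1 : Matrix (JCol N) (JCol N) ℝ).submatrix τ id, ?_, ?_, ?_, ?_, ?_⟩
  · intro r c hrc
    have hre : σ r = c := by
      by_contra hcon
      exact hrc (Matrix.one_apply_ne hcon)
    rw [← hre, hσ r]
    exact hallow r
  · intro r c hrc; exact absurd rfl hrc
  · intro r c hrc; exact absurd rfl hrc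
  · intro r c hrc
    have hre : τ r = c := by
      by_contra hcon
      exact hrc (Matrix.one_apply_ne hcon)
    rw [← hre]
    have : τ r = σ ((rowEquiv M O C).symm r) := rfl
    rw [this]
    have h2 := (allowedD_rowEquiv T M O C ((rowEquiv M O C).symm r)
      (σ ((rowEquiv M O C).symm r)))
    rw [Equiv.apply_symm_apply] at h2
    exact h2.mpr (by rw [hσ]; exact hallow _)
  · refine ⟨(1 : Matrix (JCol N) (JCol N) ℝ).submatrix id σ, ?_, ?_, ?_⟩
    · have := Matrix.submatrix_mul_equiv (1 : Matrix (JCol N) (JCol N) ℝ)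
        (1 : Matrix (JCol N) (JCol N) ℝ) (⇑σ) (Equiv.refl (JCol N)) (⇑σ)
      simp only [Equiv.coe_refl] at this
      rw [this, one_mul, Matrix.submatrix_one_equiv]
    · have := Matrix.submatrix_mul_equiv (1 : Matrix (JCol N) (JCol N) ℝ)
        (1 : Matrix (JCol N) (JCol N) ℝ) id σ id
      rw [this, one_mul, Matrix.submatrix_id_id]
    · refine ⟨(1 : Matrix (JCol N) (JCol N) ℝ).submatrix id τ, ?_, ?_⟩
      · simp only [Matrix.zero_mul, Matrix.mul_zero, sub_zero]
        have := Matrix.submatrix_mul_equiv (1 : Matrix (JCol N) (JCol N) ℝ)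
          (1 : Matrix (JCol N) (JCol N) ℝ) (⇑τ) (Equiv.refl (JCol N)) (⇑τ)
        simp only [Equiv.coe_refl] at this
        rw [this, one_mul, Matrix.submatrix_one_equiv]
      · simp only [Matrix.zero_mul, Matrix.mul_zero, sub_zero]
        have := Matrix.submatrix_mul_equiv (1 : Matrix (JCol N) (JCol N) ℝ)
          (1 : Matrix (JCol N) (JCol N) ℝ) id τ id
        rw [this, one_mul, Matrix.submatrix_id_id]
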